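/- Let ξ solve dξ/dt = Aξ + BKξ(t_k) on [t_k, t_{k+1}) (control held constant at the value Kξ(t_k)), let P be symmetric positive definite and W(t) = ξ(t)ᵀPξ(t). Then dW/dt(t) = z(t)ᵀ G z(t) where z(t) = [(P^{1/2}ξ(t))ᵀ, (P^{1/2}ξ(t_k))ᵀ]ᵀ and G is the symmetric 2m×2m matrix with blocks G₁₁ = P^{1/2}AP^{−1/2} + (P^{1/2}AP^{−1/2})ᵀ, G₁₂ = P^{1/2}BKP^{−1/2}, G₂₁ = G₁₂ᵀ, G₂₂ = 0. Consequently λ_m(G)(W(t) + W(t_k)) ≤ dW/dt(t) ≤ λ_M(G)(W(t) + W(t_k)). -/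

import Mathlib

open Matrix

private lemma rayleigh {n : Type*} [Fintype n] [DecidableEq n] (M : Matrix n n ℝ)
    (hM : M.IsHermitian) (z : n → ℝ) :
    (⨅ i, hM.eigenvalues i) * (z ⬝ᵥ z) ≤ z ⬝ᵥ M.mulVec z ∧
      z ⬝ᵥ M.mulVec z ≤ (⨆ i, hM.eigenvalues i) * (z ⬝ᵥ z) := by
  set U : Matrix n n ℝ := (hM.eigenvectorUnitary : Matrix n n ℝ) with hU
  set w : n → ℝ := (star U).mulVec z with hw
  have hUU : U * star U = 1 := (Matrix.mem_unitaryGroup_iff).mp hM.eigenvectorUnitary.2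
  have hstar : (star U)ᵀ = U := by
    rw [Matrix.star_eq_conjTranspose, Matrix.conjTranspose_eq_transpose_of_trivial,
      Matrix.transpose_transpose]
  have hwz : w = z ᵥ* U := by
    rw [hw]; conv_rhs => rw [← hstar, vecMul_transpose]
  have hzz : z ⬝ᵥ z = w ⬝ᵥ w := by
    nth_rewrite 2 [hw]
    rw [hwz, ← dotProduct_mulVec, mulVec_mulVec, hUU, one_mulVec]
  have hcoe : RCLike.ofReal ∘ hM.eigenvalues = hM.eigenvalues := by
    funext i; simp
  have hdiag : z ⬝ᵥ M.mulVec z = ∑ i, hM.eigenvalues i * (w i)^2 := by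
    conv_lhs => rw [hM.spectral_theorem, hcoe, Unitary.conjStarAlgAut_apply, ← mulVec_mulVec, ← mulVec_mulVec, ← hw,
      ← hU, dotProduct_mulVec, ← hwz]
    simp [dotProduct, mulVec_diagonal]
    exact Finset.sum_congr rfl fun i _ => by ring
  have hww : ∀ i, 0 ≤ (w i)^2 := fun i => sq_nonneg _
  constructor
  · rcases isEmpty_or_nonempty n with hn | hn
    · simp [dotProduct]
    · rw [hdiag, hzz]
      have : (⨅ i, hM.eigenvalues i) * (w ⬝ᵥ w) = ∑ i, (⨅ i, hM.eigenvalues i) * (w i)^2 := by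
        rw [dotProduct, Finset.mul_sum]
        exact Finset.sum_congr rfl fun i _ => by ring
      rw [this]
      refine Finset.sum_le_sum fun i _ => mul_le_mul_of_nonneg_right ?_ (hww i)
      exact ciInf_le (Set.Finite.bddBelow (Set.finite_range _)) i
  · rcases isEmpty_or_nonempty n with hn | hn
    · simp [dotProduct]
    · rw [hdiag, hzz]
      have : (⨆ i, hM.eigenvalues i) * (w ⬝ᵥ w) = ∑ i, (⨆ i, hM.eigenvalues i) * (w i)^2 := by
        rw [dotProduct, Finset.mul_sum]
        exact Finset.sum_congr rfl fun i _ => by ring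
      rw [this]
      refine Finset.sum_le_sum fun i _ => mul_le_mul_of_nonneg_right ?_ (hww i)
      exact le_ciSup (Set.Finite.bddAbove (Set.finite_range _)) i

private lemma sandwich' {a b c : ℕ} (M : Matrix (Fin a) (Fin b) ℝ) (N : Matrix (Fin a) (Fin c) ℝ)
    (u : Fin b → ℝ) (w : Fin c → ℝ) :
    (M.mulVec u) ⬝ᵥ (N.mulVec w) = u ⬝ᵥ (Mᵀ * N).mulVec w := by
  conv_lhs => rw [← vecMul_transpose, ← dotProduct_mulVec, mulVec_mulVec]

private lemma sandwich {m : ℕ} (Q M : Matrix (Fin m) (Fin m) ℝ) (u w : Fin m → ℝ) :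
    (Q.mulVec u) ⬝ᵥ M.mulVec (Q.mulVec w) = u ⬝ᵥ (Qᵀ * M * Q).mulVec w := by
  conv_lhs => rw [← vecMul_transpose, ← dotProduct_mulVec, mulVec_mulVec, mulVec_mulVec]

/-- For the sampled-data dynamics `dξ/dt = Aξ + BKξ(t_k)` and
`W(t) = ξ(t)ᵀPξ(t)`, one has `dW/dt = z(t)ᵀGz(t)` with
`z(t) = [(P^{1/2}ξ(t))ᵀ (P^{1/2}ξ(t_k))ᵀ]ᵀ` and `G` the symmetric block matrix with
blocks `G₁₁ = P^{1/2}AP^{-1/2} + (P^{1/2}AP^{-1/2})ᵀ`, `G₁₂ = P^{1/2}BKP^{-1/2}`,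
`G₂₁ = G₁₂ᵀ`, `G₂₂ = 0`; consequently
`λ_m(G)(W(t)+W(t_k)) ≤ dW/dt ≤ λ_M(G)(W(t)+W(t_k))`. -/
theorem stmt7 {m l : ℕ} (A : Matrix (Fin m) (Fin m) ℝ) (B : Matrix (Fin m) (Fin l) ℝ)
    (K : Matrix (Fin l) (Fin m) ℝ)
    (P Q : Matrix (Fin m) (Fin m) ℝ) (hP : P.PosDef) (hQ : Q.PosDef)
    (hQsq : Q * Q = P) (hQsym : Qᵀ = Q) (hQinv : Invertible Q)
    (G : Matrix (Fin m ⊕ Fin m) (Fin m ⊕ Fin m) ℝ)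
    (hGdef : G = Matrix.fromBlocks
      (Q * A * Q⁻¹ + (Q * A * Q⁻¹)ᵀ) (Q * (B * K) * Q⁻¹) ((Q * (B * K) * Q⁻¹)ᵀ) 0)
    (hG : G.IsHermitian)
    (tk tk1 : ℝ) (xk : EuclideanSpace ℝ (Fin m))
    (ξ : ℝ → EuclideanSpace ℝ (Fin m)) (hξk : ξ tk = xk)
    (hξ : ∀ t ∈ Set.Ico tk tk1, HasDerivAt ξ
      ((show EuclideanSpace ℝ (Fin m) from WithLp.toLp 2 (A.mulVec (ξ t))) +
       (show EuclideanSpace ℝ (Fin m) from WithLp.toLp 2 ((B * K).mulVec xk))) t) :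
    ∀ t ∈ Set.Ico tk tk1,
      HasDerivAt (fun s => ξ s ⬝ᵥ P.mulVec (ξ s))
        (Sum.elim (Q.mulVec (ξ t)) (Q.mulVec xk) ⬝ᵥ
          G.mulVec (Sum.elim (Q.mulVec (ξ t)) (Q.mulVec xk))) t ∧
      (⨅ i, hG.eigenvalues i) * (ξ t ⬝ᵥ P.mulVec (ξ t) + xk ⬝ᵥ P.mulVec xk) ≤
        Sum.elim (Q.mulVec (ξ t)) (Q.mulVec xk) ⬝ᵥ
          G.mulVec (Sum.elim (Q.mulVec (ξ t)) (Q.mulVec xk)) ∧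
      Sum.elim (Q.mulVec (ξ t)) (Q.mulVec xk) ⬝ᵥ
          G.mulVec (Sum.elim (Q.mulVec (ξ t)) (Q.mulVec xk)) ≤
        (⨆ i, hG.eigenvalues i) * (ξ t ⬝ᵥ P.mulVec (ξ t) + xk ⬝ᵥ P.mulVec xk) := by
  intro t ht
  have hQQ : Q⁻¹ * Q = 1 := Matrix.inv_mul_of_invertible Q
  have hQQ' : Q * Q⁻¹ = 1 := Matrix.mul_inv_of_invertible Q
  have hQit : Q⁻¹ᵀ = Q⁻¹ := by rw [Matrix.transpose_nonsing_inv, hQsym]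
  set x : Fin m → ℝ := (ξ t).ofLp with hx
  set v : Fin m → ℝ := A.mulVec x + (B * K).mulVec xk with hv
  -- the z ⬝ᵥ z = W + W_k identity
  have hzz : Sum.elim (Q.mulVec x) (Q.mulVec xk) ⬝ᵥ Sum.elim (Q.mulVec x) (Q.mulVec xk)
      = x ⬝ᵥ P.mulVec x + xk ⬝ᵥ P.mulVec xk := by
    rw [sumElim_dotProduct_sumElim]
    have h1 : ∀ u : Fin m → ℝ, (Q.mulVec u) ⬝ᵥ (Q.mulVec u) = u ⬝ᵥ P.mulVec u := by
      intro u
      have := sandwich Q 1 u u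
      rw [one_mulVec, mul_one, hQsym, hQsq] at this
      exact this
    rw [h1, h1]
  -- algebra: dW equals z ⬝ᵥ G z
  have halg : v ⬝ᵥ P.mulVec x + x ⬝ᵥ P.mulVec v
      = Sum.elim (Q.mulVec x) (Q.mulVec xk) ⬝ᵥ
          G.mulVec (Sum.elim (Q.mulVec x) (Q.mulVec xk)) := by
    have e1 : Qᵀ * (Q * A * Q⁻¹ + (Q * A * Q⁻¹)ᵀ) * Q = P * A + Aᵀ * P := by
      rw [hQsym, Matrix.transpose_mul, Matrix.transpose_mul, hQit, hQsym]
      rw [mul_add, add_mul]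
      congr 1
      · rw [show Q * (Q * A * Q⁻¹) * Q = (Q * Q) * A * (Q⁻¹ * Q) by simp only [mul_assoc], hQQ, hQsq, mul_one]
      · rw [show Q * (Q⁻¹ * (Aᵀ * Q)) * Q = (Q * Q⁻¹) * Aᵀ * (Q * Q) by simp only [mul_assoc], hQQ', hQsq, one_mul]
    have e2 : Qᵀ * (Q * (B * K) * Q⁻¹) * Q = P * (B * K) := by
      rw [hQsym, show Q * (Q * (B * K) * Q⁻¹) * Q = (Q * Q) * (B * K) * (Q⁻¹ * Q) by simp only [mul_assoc],
        hQQ, hQsq, mul_one]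
    have e3 : Qᵀ * (Q * (B * K) * Q⁻¹)ᵀ * Q = (B * K)ᵀ * P := by
      rw [hQsym, Matrix.transpose_mul, Matrix.transpose_mul, hQit, hQsym]
      rw [show Q * (Q⁻¹ * ((B * K)ᵀ * Q)) * Q = (Q * Q⁻¹) * (B * K)ᵀ * (Q * Q) by simp only [mul_assoc],
        hQQ', hQsq, one_mul]
    have hL : v ⬝ᵥ P.mulVec x + x ⬝ᵥ P.mulVec v
        = x ⬝ᵥ (Aᵀ * P).mulVec x + xk ⬝ᵥ ((B * K)ᵀ * P).mulVec x
          + x ⬝ᵥ (P * A).mulVec x + x ⬝ᵥ (P * (B * K)).mulVec xk := by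
      rw [hv, add_dotProduct, mulVec_add, dotProduct_add, sandwich' A P x x,
        sandwich' (B * K) P xk x, mulVec_mulVec, mulVec_mulVec]
      ring
    have hR : Sum.elim (Q.mulVec x) (Q.mulVec xk) ⬝ᵥ
          G.mulVec (Sum.elim (Q.mulVec x) (Q.mulVec xk))
        = x ⬝ᵥ (P * A + Aᵀ * P).mulVec x + x ⬝ᵥ (P * (B * K)).mulVec xk
          + xk ⬝ᵥ ((B * K)ᵀ * P).mulVec x := by
      rw [hGdef, fromBlocks_mulVec, sumElim_dotProduct_sumElim]
      simp only [Sum.elim_comp_inl, Sum.elim_comp_inr, zero_mulVec, add_zero]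
      rw [dotProduct_add, sandwich Q _ x x, sandwich Q _ x xk, sandwich Q _ xk x, e1, e2, e3]
    rw [hL, hR, add_mulVec, dotProduct_add]
    ring
  have hcomp : ∀ i, HasDerivAt (fun s => ξ s i) (v i) t := by
    intro i
    exact (EuclideanSpace.proj i).hasFDerivAt.comp_hasDerivAt t (hξ t ht)
  have hW : HasDerivAt (fun s => ξ s ⬝ᵥ P.mulVec (ξ s))
      (∑ i, (v i * (∑ j, P i j * x j) + x i * (∑ j, P i j * v j))) t := by
    have hinner : ∀ i : Fin m, HasDerivAt (fun s => ∑ j, P i j * ξ s j)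
        (∑ j, P i j * v j) t := fun i =>
      HasDerivAt.fun_sum (fun j _ => (hcomp j).const_mul (P i j))
    exact HasDerivAt.fun_sum (fun i _ => (hcomp i).mul (hinner i))
  have hsum : (∑ i, (v i * (∑ j, P i j * x j) + x i * (∑ j, P i j * v j)))
      = v ⬝ᵥ P.mulVec x + x ⬝ᵥ P.mulVec v := by
    rw [Finset.sum_add_distrib]; rfl
  rw [hsum, halg] at hW
  obtain ⟨h1, h2⟩ := rayleigh G hG (Sum.elim (Q.mulVec x) (Q.mulVec xk))
  rw [hzz] at h1 h2
  exact ⟨hW, h1, h2⟩
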